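/- Let X be a symmetric n×n matrix of variables over a field of characteristic 0 and let i, j, k be distinct indices. The 2×2 minor operator with one diagonal element, ∂²/(∂x_{ij}∂x_{ik}) − ∂²/(∂x_{ii}∂x_{jk}), annihilates perm(X). -/

import Mathlib

open MvPolynomial

section MinorAux
open Finsupp

variable {n : ℕ}

noncomputable def dd (σ : Equiv.Perm (Fin n)) : Sym2 (Fin n) →₀ ℕ :=
  ∑ t : Fin n, Finsupp.single s(t, σ t) 1

lemma prod_eq (K : Type*) [Field K] (σ : Equiv.Perm (Fin n)) :
    (∏ t : Fin n, (X s(t, σ t) : MvPolynomial (Sym2 (Fin n)) K)) = monomial (dd σ) 1 := by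
  rw [dd, monomial_sum_one]
  exact Finset.prod_congr rfl fun t _ => rfl

lemma dd_apply (σ : Equiv.Perm (Fin n)) (e : Sym2 (Fin n)) :
    dd σ e = ∑ t : Fin n, if s(t, σ t) = e then 1 else 0 := by
  rw [dd, Finsupp.finset_sum_apply]
  exact Finset.sum_congr rfl fun t _ => Finsupp.single_apply

lemma dd_off (σ : Equiv.Perm (Fin n)) {a b : Fin n} (hab : a ≠ b) :
    dd σ s(a, b) = (if σ a = b then 1 else 0) + (if σ b = a then 1 else 0) := by
  rw [dd_apply]
  rw [show (Finset.univ : Finset (Fin n)) = insert a (insert b (Finset.univ \ {a, b})) from ?_]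
  · rw [Finset.sum_insert, Finset.sum_insert]
    · have h1 : (s(a, σ a) = s(a, b)) ↔ σ a = b := by
        simp [Sym2.eq_iff]; tauto
      have h2 : (s(b, σ b) = s(a, b)) ↔ σ b = a := by
        constructor
        · rw [Sym2.eq_iff]; rintro (⟨h, _⟩ | ⟨_, h⟩) <;> [exact absurd h hab.symm; exact h]
        · intro h; rw [h, Sym2.eq_swap]
      rw [Finset.sum_eq_zero, if_congr h1 rfl rfl, if_congr h2 rfl rfl, add_zero]
      intro t ht
      simp only [Finset.mem_sdiff, Finset.mem_insert, Finset.mem_singleton] at ht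
      rw [if_neg]
      rw [Sym2.eq_iff]
      rintro (⟨h, _⟩ | ⟨h, _⟩) <;> simp [h] at ht
    · simp
    · simp only [Finset.mem_insert, Finset.mem_sdiff, Finset.mem_singleton]
      simp [hab]
  · ext t
    simp only [Finset.mem_insert, Finset.mem_sdiff, Finset.mem_univ, Finset.mem_singleton,
      true_and]
    tauto

lemma dd_diag (σ : Equiv.Perm (Fin n)) (a : Fin n) :
    dd σ s(a, a) = if σ a = a then 1 else 0 := by
  rw [dd_apply, Finset.sum_eq_single a]
  · congr 1
    simp [Sym2.eq_iff]
  · intro t _ ht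
    rw [if_neg]
    rw [Sym2.eq_iff]
    rintro (⟨h, _⟩ | ⟨h, _⟩) <;> exact ht h
  · simp

lemma dd_decomp (σ : Equiv.Perm (Fin n)) {a b : Fin n} (hab : a ≠ b) :
    dd σ = Finsupp.single s(a, σ a) 1 + Finsupp.single s(b, σ b) 1 +
      ∑ t ∈ (Finset.univ.erase a).erase b, Finsupp.single s(t, σ t) 1 := by
  rw [dd, ← Finset.add_sum_erase _ _ (Finset.mem_univ a),
    ← Finset.add_sum_erase _ _ (Finset.mem_erase.2 ⟨hab.symm, Finset.mem_univ b⟩),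
    ← add_assoc]

lemma tail_congr (σ : Equiv.Perm (Fin n)) (a b : Fin n) :
    ∑ t ∈ (Finset.univ.erase a).erase b, Finsupp.single s(t, (σ * Equiv.swap a b) t) (1 : ℕ) =
    ∑ t ∈ (Finset.univ.erase a).erase b, Finsupp.single s(t, σ t) 1 := by
  refine Finset.sum_congr rfl fun t ht => ?_
  simp only [Finset.mem_erase] at ht
  rw [Equiv.Perm.mul_apply, Equiv.swap_apply_of_ne_of_ne ht.2.1 ht.1]

lemma subsub (u v R : Sym2 (Fin n) →₀ ℕ) : u + v + R - u - v = R := by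
  rw [add_assoc, add_tsub_cancel_left, add_tsub_cancel_left]

lemma expEq1 {i j k : Fin n} (hij : i ≠ j) (σ : Equiv.Perm (Fin n))
    (h1 : σ i = i) (h2 : σ j = k) :
    dd (σ * Equiv.swap i j) - Finsupp.single s(i,k) 1 - Finsupp.single s(i,j) 1 =
    dd σ - Finsupp.single s(j,k) 1 - Finsupp.single s(i,i) 1 := by
  rw [dd_decomp (σ * Equiv.swap i j) hij, dd_decomp σ hij, tail_congr]
  rw [Equiv.Perm.mul_apply, Equiv.Perm.mul_apply, Equiv.swap_apply_left,
    Equiv.swap_apply_right, h1, h2]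
  rw [show s(j, i) = s(i, j) from Sym2.eq_swap, subsub,
    add_comm (Finsupp.single s(i,i) 1) (Finsupp.single s(j,k) 1), subsub]

lemma expEq2 {i j k : Fin n} (hik : i ≠ k) (σ : Equiv.Perm (Fin n))
    (h1 : σ i = i) (h2 : σ k = j) :
    dd (σ * Equiv.swap i k) - Finsupp.single s(i,k) 1 - Finsupp.single s(i,j) 1 =
    dd σ - Finsupp.single s(j,k) 1 - Finsupp.single s(i,i) 1 := by
  rw [dd_decomp (σ * Equiv.swap i k) hik, dd_decomp σ hik, tail_congr]
  rw [Equiv.Perm.mul_apply, Equiv.Perm.mul_apply, Equiv.swap_apply_left,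
    Equiv.swap_apply_right, h1, h2]
  rw [show s(k, i) = s(i, k) from Sym2.eq_swap,
    show s(k, j) = s(j, k) from Sym2.eq_swap,
    add_comm (Finsupp.single s(i,j) 1) (Finsupp.single s(i,k) 1), subsub,
    add_comm (Finsupp.single s(i,i) 1) (Finsupp.single s(j,k) 1), subsub]

lemma mono_ite {K : Type*} [Field K] (E : Sym2 (Fin n) →₀ ℕ) (c : Prop) [Decidable c] :
    (monomial E (((if c then 1 else 0 : ℕ) : K))) = if c then monomial E (1 : K) else 0 := by
  split_ifs <;> simp

lemma claim1 {K : Type*} [Field K] {i j k : Fin n} (hij : i ≠ j) (hik : i ≠ k) (hjk : j ≠ k)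
    (σ : Equiv.Perm (Fin n)) :
    pderiv s(i, j) (pderiv s(i, k) (monomial (dd σ) (1 : K))) =
      (if σ i = k ∧ σ j = i then
        monomial (dd σ - Finsupp.single s(i,k) 1 - Finsupp.single s(i,j) 1) (1 : K) else 0) +
      (if σ i = j ∧ σ k = i then
        monomial (dd σ - Finsupp.single s(i,k) 1 - Finsupp.single s(i,j) 1) (1 : K) else 0) := by
  have hne : s(i, j) ≠ s(i, k) := by
    intro h
    rcases Sym2.eq_iff.1 h with ⟨-, h⟩ | ⟨h, -⟩
    exacts [hjk h, hik h]
  rw [pderiv_monomial, pderiv_monomial]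
  have happ : (dd σ - (Finsupp.single s(i,k) 1 : Sym2 (Fin n) →₀ ℕ)) s(i,j) = dd σ s(i,j) := by
    rw [Finsupp.tsub_apply, Finsupp.single_apply, if_neg (Ne.symm hne), Nat.sub_zero]
  rw [happ]
  have key : dd σ s(i,k) * dd σ s(i,j) =
      (if σ i = k ∧ σ j = i then 1 else 0) + (if σ i = j ∧ σ k = i then 1 else 0) := by
    rw [dd_off σ hik, dd_off σ hij]
    have hc1 : ¬(σ i = k ∧ σ i = j) := fun ⟨p, q⟩ => hjk (q.symm.trans p)
    have hc2 : ¬(σ k = i ∧ σ j = i) := fun ⟨p, q⟩ => hjk (σ.injective (q.trans p.symm))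
    by_cases h1 : σ i = k <;> by_cases h2 : σ k = i <;> by_cases h3 : σ i = j <;>
      by_cases h4 : σ j = i <;> simp_all
  have : ((1 : K) * (dd σ s(i,k) : K)) * (dd σ s(i,j) : K) =
      ((dd σ s(i,k) * dd σ s(i,j) : ℕ) : K) := by push_cast; ring
  rw [this, key, Nat.cast_add, map_add, mono_ite, mono_ite]

lemma claim2 {K : Type*} [Field K] {i j k : Fin n} (hij : i ≠ j) (hik : i ≠ k) (hjk : j ≠ k)
    (σ : Equiv.Perm (Fin n)) :
    pderiv s(i, i) (pderiv s(j, k) (monomial (dd σ) (1 : K))) =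
      (if σ i = i ∧ σ j = k then
        monomial (dd σ - Finsupp.single s(j,k) 1 - Finsupp.single s(i,i) 1) (1 : K) else 0) +
      (if σ i = i ∧ σ k = j then
        monomial (dd σ - Finsupp.single s(j,k) 1 - Finsupp.single s(i,i) 1) (1 : K) else 0) := by
  have hne : s(i, i) ≠ s(j, k) := by
    intro h
    rcases Sym2.eq_iff.1 h with ⟨h, -⟩ | ⟨h, -⟩
    exacts [hij h, hik h]
  rw [pderiv_monomial, pderiv_monomial]
  have happ : (dd σ - (Finsupp.single s(j,k) 1 : Sym2 (Fin n) →₀ ℕ)) s(i,i) = dd σ s(i,i) := by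
    rw [Finsupp.tsub_apply, Finsupp.single_apply, if_neg (Ne.symm hne), Nat.sub_zero]
  rw [happ]
  have key : dd σ s(j,k) * dd σ s(i,i) =
      (if σ i = i ∧ σ j = k then 1 else 0) + (if σ i = i ∧ σ k = j then 1 else 0) := by
    rw [dd_off σ hjk, dd_diag]
    by_cases h1 : σ j = k <;> by_cases h2 : σ k = j <;> by_cases h3 : σ i = i <;> simp_all
  have : ((1 : K) * (dd σ s(j,k) : K)) * (dd σ s(i,i) : K) =
      ((dd σ s(j,k) * dd σ s(i,i) : ℕ) : K) := by push_cast; ring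
  rw [this, key, Nat.cast_add, map_add, mono_ite, mono_ite]

end MinorAux

/-- The permanent of the generic symmetric `n × n` matrix. -/
noncomputable def symPerm (K : Type*) [Field K] (n : ℕ) : MvPolynomial (Sym2 (Fin n)) K :=
  ∑ σ : Equiv.Perm (Fin n), ∏ i : Fin n, X s(i, σ i)

/-- For the permanent of the generic symmetric `n × n` matrix and distinct indices
`i, j, k`, the `2×2` minor with one diagonal element, i.e. the operator
`∂²/(∂x_{ij}∂x_{ik}) − ∂²/(∂x_{ii}∂x_{jk})`, annihilates `perm X`. -/
theorem minor_one_diag_annihilates_perm {K : Type*} [Field K] [CharZero K]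
    (n : ℕ) (i j k : Fin n) (hij : i ≠ j) (hik : i ≠ k) (hjk : j ≠ k) :
    pderiv s(i, j) (pderiv s(i, k) (symPerm K n))
      - pderiv s(i, i) (pderiv s(j, k) (symPerm K n)) = 0 := by
  rw [sub_eq_zero, symPerm]
  simp only [map_sum]
  have hm : ∀ σ : Equiv.Perm (Fin n),
      (∏ t : Fin n, (X s(t, σ t) : MvPolynomial (Sym2 (Fin n)) K)) = monomial (dd σ) 1 :=
    prod_eq K
  simp only [hm, claim1 hij hik hjk, claim2 hij hik hjk, Finset.sum_add_distrib]
  congr 1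
  · refine (Fintype.sum_equiv (Equiv.mulRight (Equiv.swap i j)) _ _ fun σ => ?_).symm
    have hτi : (σ * Equiv.swap i j) i = σ j := by
      rw [Equiv.Perm.mul_apply, Equiv.swap_apply_left]
    have hτj : (σ * Equiv.swap i j) j = σ i := by
      rw [Equiv.Perm.mul_apply, Equiv.swap_apply_right]
    show _ = if (σ * Equiv.swap i j) i = k ∧ (σ * Equiv.swap i j) j = i then
      monomial (dd (σ * Equiv.swap i j) - Finsupp.single s(i,k) 1 - Finsupp.single s(i,j) 1) (1 : K)
      else _
    by_cases h : σ i = i ∧ σ j = k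
    · rw [if_pos h, if_pos (by rw [hτi, hτj]; exact ⟨h.2, h.1⟩), expEq1 hij σ h.1 h.2]
    · rw [if_neg h, if_neg ?_]
      intro hc
      rw [hτi, hτj] at hc
      exact h ⟨hc.2, hc.1⟩
  · refine (Fintype.sum_equiv (Equiv.mulRight (Equiv.swap i k)) _ _ fun σ => ?_).symm
    have hτi : (σ * Equiv.swap i k) i = σ k := by
      rw [Equiv.Perm.mul_apply, Equiv.swap_apply_left]
    have hτk : (σ * Equiv.swap i k) k = σ i := by
      rw [Equiv.Perm.mul_apply, Equiv.swap_apply_right]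
    show _ = if (σ * Equiv.swap i k) i = j ∧ (σ * Equiv.swap i k) k = i then
      monomial (dd (σ * Equiv.swap i k) - Finsupp.single s(i,k) 1 - Finsupp.single s(i,j) 1) (1 : K)
      else _
    by_cases h : σ i = i ∧ σ k = j
    · rw [if_pos h, if_pos (by rw [hτi, hτk]; exact ⟨h.2, h.1⟩), expEq2 hik σ h.1 h.2]
    · rw [if_neg h, if_neg ?_]
      intro hc
      rw [hτi, hτk] at hc
      exact h ⟨hc.2, hc.1⟩
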